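/- Local quadratic convergence of Picard–Newton to a nonsingular solution for any problem data (the unnumbered Theorem of Section 3.2): let u ∈ V be a weak NSE solution that is nonsingular with inf-sup constant δ > 0, let (uₖ), (ûₖ) be Picard–Newton iterates from u₀ ∈ V (for every k ≥ 0, û_{k+1} is a Picard update of uₖ and u_{k+1} is a Newton update of û_{k+1}), and set α := Mν⁻²‖f‖ and λ₀ := δ − 2Mα‖u − u₀‖. If λ₀ > 0 and (Mα²/λ₀)‖u − u₀‖ < 1, then for every k ≥ 0, ‖u − u_{k+1}‖ ≤ (Mα²/λ₀)‖u − uₖ‖², and ‖u − uₖ‖ → 0 as k → ∞; in particular the iterates converge at least linearly, and in fact quadratically, to u. -/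

import Mathlib

open scoped RealInnerProductSpace

set_option maxHeartbeats 1000000 in
/-- Local quadratic convergence of Picard–Newton to a nonsingular solution for
any problem data: let `u` be a nonsingular weak NSE solution with inf-sup
constant `δ > 0`, let `(u k)`, `(uhat k)` be Picard–Newton iterates, and set
`α := Mν⁻²‖f‖` and `λ₀ := δ − 2Mα‖u − u 0‖`. If `λ₀ > 0` and
`(Mα²/λ₀)‖u − u 0‖ < 1`, then for every `k`,
`‖u − u (k+1)‖ ≤ (Mα²/λ₀)‖u − u k‖²` and `‖u − u k‖ → 0`. -/
theorem picard_newton_local_convergence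
    {V : Type*} [NormedAddCommGroup V] [InnerProductSpace ℝ V]
    (b : V →ₗ[ℝ] V →ₗ[ℝ] V →ₗ[ℝ] ℝ)
    (hskew : ∀ z w : V, b z w w = 0)
    (M : ℝ) (hM : 0 < M)
    (hbound : ∀ z w v : V, |b z w v| ≤ M * ‖z‖ * ‖w‖ * ‖v‖)
    (f : V →L[ℝ] ℝ) (ν : ℝ) (hν : 0 < ν)
    (α : ℝ) (hα : α = M * ν⁻¹ ^ 2 * ‖f‖)
    (δ : ℝ) (hδ : 0 < δ)
    (usol : V)
    (hNSE : ∀ v : V, ν * ⟪usol, v⟫ + b usol usol v = f v)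
    (hnonsing : ∀ w : V, ∀ c : ℝ, c < δ * ‖w‖ →
      ∃ v : V, v ≠ 0 ∧ c * ‖v‖ < ν * ⟪w, v⟫ + b usol w v + b w usol v)
    (u uhat : ℕ → V)
    (hPicard : ∀ k : ℕ, ∀ v : V,
      ν * ⟪uhat (k + 1), v⟫ + b (u k) (uhat (k + 1)) v = f v)
    (hNewton : ∀ k : ℕ, ∀ v : V,
      ν * ⟪u (k + 1), v⟫ + b (uhat (k + 1)) (u (k + 1)) v
        + b (u (k + 1)) (uhat (k + 1)) v - b (uhat (k + 1)) (uhat (k + 1)) v = f v)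
    (lam₀ : ℝ) (hlam : lam₀ = δ - 2 * M * α * ‖usol - u 0‖)
    (hlam0 : 0 < lam₀)
    (hinit : M * α ^ 2 / lam₀ * ‖usol - u 0‖ < 1) :
    (∀ k : ℕ, ‖usol - u (k + 1)‖ ≤ M * α ^ 2 / lam₀ * ‖usol - u k‖ ^ 2)
    ∧ Filter.Tendsto (fun k : ℕ => ‖usol - u k‖) Filter.atTop (nhds 0) := by
  have hα0 : 0 ≤ α := by rw [hα]; positivity
  -- bound on the solution norm : ν‖usol‖ ≤ ‖f‖
  have husol : ν * ‖usol‖ ≤ ‖f‖ := by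
    have h1 := hNSE usol
    rw [hskew, real_inner_self_eq_norm_sq] at h1
    have h2 : f usol ≤ ‖f‖ * ‖usol‖ :=
      le_trans (le_abs_self _) (by simpa [Real.norm_eq_abs] using f.le_opNorm usol)
    rcases eq_or_lt_of_le (norm_nonneg usol) with h | h
    · rw [← h, mul_zero]; exact norm_nonneg f
    · exact le_of_mul_le_mul_right (by nlinarith) h
  -- Picard error bound: ‖usol - uhat (k+1)‖ ≤ α ‖usol - u k‖
  have hPic : ∀ k : ℕ, ‖usol - uhat (k + 1)‖ ≤ α * ‖usol - u k‖ := by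
    intro k
    set e : V := usol - uhat (k + 1) with he
    have hid : ν * ⟪e, e⟫ = - b (usol - u k) usol e := by
      have h1 := hNSE e
      have h2 := hPicard k e
      have h3 := hskew (u k) e
      rw [he] at *
      simp only [map_sub, LinearMap.sub_apply, inner_sub_left] at *
      linarith
    rw [real_inner_self_eq_norm_sq] at hid
    have hb : - b (usol - u k) usol e ≤ M * ‖usol - u k‖ * ‖usol‖ * ‖e‖ :=
      le_trans (neg_le_abs _) (hbound _ _ _)
    have hkey : ν * ‖e‖ ^ 2 ≤ M * ‖usol - u k‖ * ‖usol‖ * ‖e‖ := by linarith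
    rcases eq_or_lt_of_le (norm_nonneg e) with h | h
    · rw [← h]; positivity
    · have h4 : ν * ‖e‖ ≤ M * ‖usol - u k‖ * ‖usol‖ :=
        le_of_mul_le_mul_right (by nlinarith) h
      have h5 : ‖usol‖ ≤ ν⁻¹ * ‖f‖ := by
        rw [le_inv_mul_iff₀ hν]; exact husol
      have h6 : ν * ‖e‖ ≤ M * ‖usol - u k‖ * (ν⁻¹ * ‖f‖) := by
        nlinarith [norm_nonneg (usol - u k), mul_nonneg (mul_nonneg hM.le (norm_nonneg (usol - u k))) (sub_nonneg.2 h5)]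
      rw [hα]
      rw [← mul_le_mul_iff_right₀ hν]
      have : ν * (M * ν⁻¹ ^ 2 * ‖f‖ * ‖usol - u k‖) = M * ‖usol - u k‖ * (ν⁻¹ * ‖f‖) := by
        field_simp
      rw [this]; exact h6
  -- Newton error key inequality: δ‖e'‖ ≤ 2M‖ê‖‖e'‖ + M‖ê‖²
  have hNewt : ∀ k : ℕ, δ * ‖usol - u (k + 1)‖ ≤
      2 * M * ‖usol - uhat (k + 1)‖ * ‖usol - u (k + 1)‖ + M * ‖usol - uhat (k + 1)‖ ^ 2 := by
    intro k
    set eh : V := usol - uhat (k + 1) with heh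
    set e : V := usol - u (k + 1) with he
    have hid : ∀ v : V, ν * ⟪e, v⟫ + b usol e v + b e usol v
        = b eh e v + b e eh v - b eh eh v := by
      intro v
      have h1 := hNSE v
      have h2 := hNewton k v
      rw [he, heh] at *
      simp only [map_sub, LinearMap.sub_apply, inner_sub_left] at *
      linarith
    by_contra hcon
    push_neg at hcon
    obtain ⟨v, hv0, hvlt⟩ := hnonsing e _ hcon
    rw [hid v] at hvlt
    have hb1 := hbound eh e v
    have hb2 := hbound e eh v
    have hb3 := hbound eh eh v
    have hrhs : b eh e v + b e eh v - b eh eh v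
        ≤ (2 * M * ‖eh‖ * ‖e‖ + M * ‖eh‖ ^ 2) * ‖v‖ := by
      have := le_abs_self ((b eh) e v)
      have := le_abs_self ((b e) eh v)
      have := neg_abs_le ((b eh) eh v)
      nlinarith [abs_nonneg ((b eh) eh v)]
    linarith
  set C : ℝ := M * α ^ 2 / lam₀ with hC
  have hC0 : 0 ≤ C := by rw [hC]; positivity
  -- quadratic step given monotonicity hypothesis
  have hstep : ∀ k : ℕ, ‖usol - u k‖ ≤ ‖usol - u 0‖ →
      ‖usol - u (k + 1)‖ ≤ C * ‖usol - u k‖ ^ 2 := by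
    intro k hk
    have hp := hPic k
    have hn := hNewt k
    have hlb : lam₀ ≤ δ - 2 * M * ‖usol - uhat (k + 1)‖ := by
      rw [hlam]
      have : ‖usol - uhat (k + 1)‖ ≤ α * ‖usol - u 0‖ :=
        le_trans hp (by nlinarith)
      nlinarith
    have h1 : lam₀ * ‖usol - u (k + 1)‖ ≤ M * ‖usol - uhat (k + 1)‖ ^ 2 := by
      nlinarith [mul_le_mul_of_nonneg_right hlb (norm_nonneg (usol - u (k + 1)))]
    have h2 : M * ‖usol - uhat (k + 1)‖ ^ 2 ≤ M * α ^ 2 * ‖usol - u k‖ ^ 2 := by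
      have hsq := pow_le_pow_left₀ (norm_nonneg (usol - uhat (k + 1))) hp 2
      nlinarith [mul_le_mul_of_nonneg_left hsq hM.le]
    rw [hC, div_mul_eq_mul_div, le_div_iff₀ hlam0]
    linarith
  -- monotonicity by induction
  have hmono : ∀ k : ℕ, ‖usol - u k‖ ≤ ‖usol - u 0‖ := by
    intro k
    induction k with
    | zero => exact le_refl _
    | succ k ih =>
      have hq := hstep k ih
      calc ‖usol - u (k + 1)‖ ≤ C * ‖usol - u k‖ ^ 2 := hq
        _ = (C * ‖usol - u k‖) * ‖usol - u k‖ := by ring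
        _ ≤ (C * ‖usol - u 0‖) * ‖usol - u k‖ :=
            mul_le_mul_of_nonneg_right (mul_le_mul_of_nonneg_left ih hC0) (norm_nonneg _)
        _ ≤ 1 * ‖usol - u k‖ := mul_le_mul_of_nonneg_right hinit.le (norm_nonneg _)
        _ = ‖usol - u k‖ := one_mul _
        _ ≤ ‖usol - u 0‖ := ih
  have hquad : ∀ k : ℕ, ‖usol - u (k + 1)‖ ≤ C * ‖usol - u k‖ ^ 2 :=
    fun k => hstep k (hmono k)
  refine ⟨hquad, ?_⟩
  set ρ : ℝ := C * ‖usol - u 0‖ with hρ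
  have hρ0 : 0 ≤ ρ := mul_nonneg hC0 (norm_nonneg _)
  have hρ1 : ρ < 1 := hinit
  have hcontr : ∀ k : ℕ, ‖usol - u (k + 1)‖ ≤ ρ * ‖usol - u k‖ := by
    intro k
    have hq := hquad k
    have hk := hmono k
    calc ‖usol - u (k + 1)‖ ≤ C * ‖usol - u k‖ ^ 2 := hq
      _ = (C * ‖usol - u k‖) * ‖usol - u k‖ := by ring
      _ ≤ (C * ‖usol - u 0‖) * ‖usol - u k‖ :=
          mul_le_mul_of_nonneg_right (mul_le_mul_of_nonneg_left hk hC0) (norm_nonneg _)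
      _ = ρ * ‖usol - u k‖ := by rw [hρ]
  have hgeo : ∀ k : ℕ, ‖usol - u k‖ ≤ ρ ^ k * ‖usol - u 0‖ := by
    intro k
    induction k with
    | zero => simp
    | succ k ih =>
      calc ‖usol - u (k + 1)‖ ≤ ρ * ‖usol - u k‖ := hcontr k
        _ ≤ ρ * (ρ ^ k * ‖usol - u 0‖) := by nlinarith
        _ = ρ ^ (k + 1) * ‖usol - u 0‖ := by ring
  have hlim : Filter.Tendsto (fun k : ℕ => ρ ^ k * ‖usol - u 0‖) Filter.atTop (nhds 0) := by
    have := (tendsto_pow_atTop_nhds_zero_of_lt_one hρ0 hρ1).mul_const ‖usol - u 0‖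
    simpa using this
  exact squeeze_zero (fun k => norm_nonneg _) hgeo hlim
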